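/- Let A be a finite abelian group and let S be a reduced multiset with elements in A. Then every submultiset T ⊆ S is reduced. -/

import Mathlib

open Pointwise


/-- The sumset `Σ(S)` of a multiset `S` with elements in an abelian group:
the set of all sums of submultisets of `S` (the empty sum being `0`). -/
def sumset {A : Type*} [AddCommGroup A] [DecidableEq A] (S : Multiset A) : Finset A :=
  (S.powerset.map Multiset.sum).toFinset

/-- A multiset `S` is reduced if removing one copy of any of its elements strictly
decreases the size of its sumset. -/
def IsReducedMultiset {A : Type*} [AddCommGroup A] [DecidableEq A] (S : Multiset A) : Prop :=
  ∀ s ∈ S, (sumset (S - {s})).card < (sumset S).card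

lemma mem_sumset {A : Type*} [AddCommGroup A] [DecidableEq A] {S : Multiset A} {a : A} :
    a ∈ sumset S ↔ ∃ R, R ≤ S ∧ R.sum = a := by
  simp [sumset, Multiset.mem_powerset]

lemma sumset_mono {A : Type*} [AddCommGroup A] [DecidableEq A] {T S : Multiset A}
    (h : T ≤ S) : sumset T ⊆ sumset S := by
  intro a ha
  rw [mem_sumset] at ha ⊢
  obtain ⟨R, hR, rfl⟩ := ha
  exact ⟨R, hR.trans h, rfl⟩

lemma multiset_inter_add_sub {A : Type*} [DecidableEq A] (R S : Multiset A) :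
    R ∩ S + (R - S) = R := by
  ext a
  simp [Multiset.count_inter, Multiset.count_sub]
  omega

lemma sumset_add {A : Type*} [AddCommGroup A] [DecidableEq A] (S U : Multiset A) :
    sumset (S + U) = sumset S + sumset U := by
  ext x
  rw [Finset.mem_add, mem_sumset]
  constructor
  · rintro ⟨R, hR, rfl⟩
    refine ⟨(R ∩ S).sum, ?_, (R - S).sum, ?_, ?_⟩
    · exact mem_sumset.2 ⟨R ∩ S, Multiset.inter_le_right, rfl⟩
    · refine mem_sumset.2 ⟨R - S, ?_, rfl⟩
      rw [Multiset.sub_le_iff_le_add]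
      exact hR.trans (by rw [add_comm])
    · rw [← Multiset.sum_add, multiset_inter_add_sub]
  · rintro ⟨a, ha, b, hb, rfl⟩
    obtain ⟨R1, hR1, rfl⟩ := mem_sumset.1 ha
    obtain ⟨R2, hR2, rfl⟩ := mem_sumset.1 hb
    exact ⟨R1 + R2, add_le_add hR1 hR2, Multiset.sum_add _ _⟩

lemma add_sub_singleton {A : Type*} [DecidableEq A] {T : Multiset A} (U : Multiset A)
    {t : A} (ht : t ∈ T) : (T + U) - {t} = (T - {t}) + U := by
  have h1 : 1 ≤ T.count t := Multiset.one_le_count_iff_mem.2 ht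
  ext a
  rcases eq_or_ne a t with rfl | hc
  · simp [Multiset.count_sub, Multiset.count_add, Multiset.count_singleton]
    omega
  · simp only [Multiset.count_sub, Multiset.count_add, Multiset.count_singleton, if_neg hc]
    omega

/-- Every submultiset of a reduced multiset with elements in a finite abelian group
is reduced. -/
theorem reduced_of_le_reduced {A : Type*} [AddCommGroup A] [Fintype A] [DecidableEq A]
    (S : Multiset A) (hS : IsReducedMultiset S) (T : Multiset A) (hT : T ≤ S) :
    IsReducedMultiset T := by
  intro t ht
  by_contra h
  push_neg at h
  have hsub : sumset (T - {t}) ⊆ sumset T :=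
    sumset_mono (Multiset.sub_le_self _ _)
  have heq : sumset (T - {t}) = sumset T :=
    Finset.eq_of_subset_of_card_le hsub h
  obtain ⟨U, rfl⟩ := Multiset.le_iff_exists_add.1 hT
  have htS : t ∈ T + U := Multiset.mem_add.2 (Or.inl ht)
  have := hS t htS
  rw [add_sub_singleton U ht, sumset_add, sumset_add, heq] at this
  exact lt_irrefl _ this
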